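/- Let F be a real vector space, let Λ : F → ℝ^m be a linear map, let K ⊆ F be a convex set containing 0, and let γ : F → ℝ be positively homogeneous (γ(t f) = t γ(f) for all t ≥ 0 and f ∈ F). Let e ≥ 0 be such that γ(f′) − γ(f″) ≤ 2e for all f′, f″ ∈ K with Λ(f′) = Λ(f″). Then for all f′, f″ ∈ F with Λ(f′) = Λ(f″) and with ρ_K(f′) < ∞ and ρ_K(f″) < ∞, one has γ(f′) − γ(f″) ≤ 2e · max( ρ_K(f′), ρ_K(f″) ). -/

import Mathlib

open scoped ENNReal Pointwise

/-- The Minkowski gauge of a set `C` at `x`, valued in `[0, +∞]`: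
`ρ_C(x) = inf {t > 0 : x ∈ t • C}`, with `inf ∅ = +∞`. -/
noncomputable def gaugeE {E : Type*} [AddCommGroup E] [Module ℝ E]
    (C : Set E) (x : E) : ℝ≥0∞ :=
  sInf ((fun t : ℝ => ENNReal.ofReal t) '' {t : ℝ | 0 < t ∧ x ∈ t • C})

/-- **Scaling the two-point bound by the Minkowski gauge.** If `γ` is positively
homogeneous and `γ f' − γ f'' ≤ 2e` for all pairs in the convex set `K ∋ 0` with equal
observations, then for arbitrary pairs with equal observations and finite gauges,
`γ f' − γ f'' ≤ 2e · max(ρ_K f', ρ_K f'')`. -/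
theorem stmt_19 {F : Type*} [AddCommGroup F] [Module ℝ F] {m : ℕ}
    (Λ : F →ₗ[ℝ] (Fin m → ℝ))
    (K : Set F) (hK : Convex ℝ K) (h0K : (0 : F) ∈ K)
    (γ : F → ℝ) (hγ : ∀ t : ℝ, 0 ≤ t → ∀ f, γ (t • f) = t * γ f)
    (e : ℝ) (he : 0 ≤ e)
    (hKe : ∀ f' ∈ K, ∀ f'' ∈ K, Λ f' = Λ f'' → γ f' - γ f'' ≤ 2 * e) :
    ∀ f' f'' : F, Λ f' = Λ f'' →
      gaugeE K f' ≠ ⊤ → gaugeE K f'' ≠ ⊤ →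
      γ f' - γ f'' ≤ 2 * e * (max (gaugeE K f') (gaugeE K f'')).toReal := by
  intro f' f'' hΛ h1 h2
  -- key: if gauge < ofReal t (t > 0) then t⁻¹ • f ∈ K
  have key : ∀ f : F, ∀ t : ℝ, 0 < t → gaugeE K f < ENNReal.ofReal t →
      t⁻¹ • f ∈ K := by
    intro f t ht hlt
    obtain ⟨u, ⟨⟨s, ⟨hs, hsK⟩, rfl⟩, hu⟩⟩ := exists_lt_of_csInf_lt
      (by
        rcases (sInf_lt_iff.mp hlt) with ⟨b, hb, hb'⟩
        exact ⟨b, hb⟩) hlt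
    have hst : s < t := by
      by_contra h
      exact absurd (ENNReal.ofReal_le_ofReal (le_of_not_gt h)) (not_le.mpr hu)
    obtain ⟨x, hx, rfl⟩ := hsK
    have hmem : (s / t) • x ∈ K := by
      have := hK.smul_mem_of_zero_mem h0K hx
        (⟨div_nonneg hs.le ht.le, div_le_one_of_le₀ hst.le ht.le⟩ :
          s / t ∈ Set.Icc (0:ℝ) 1)
      exact this
    have : t⁻¹ • s • x = (s / t) • x := by
      rw [smul_smul, div_eq_inv_mul, mul_comm]
    rwa [this]
  set M := (max (gaugeE K f') (gaugeE K f'')).toReal with hM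
  have hM0 : 0 ≤ M := ENNReal.toReal_nonneg
  have hmaxne : max (gaugeE K f') (gaugeE K f'') ≠ ⊤ := by
    simp [h1, h2]
  -- for all t > M, the bound γ f' - γ f'' ≤ 2e t holds
  have hstep : ∀ t : ℝ, M < t → γ f' - γ f'' ≤ 2 * e * t := by
    intro t htM
    have ht : 0 < t := lt_of_le_of_lt hM0 htM
    have hlt : max (gaugeE K f') (gaugeE K f'') < ENNReal.ofReal t :=
      (ENNReal.lt_ofReal_iff_toReal_lt hmaxne).mpr htM
    have hg' : t⁻¹ • f' ∈ K := key f' t ht (lt_of_le_of_lt (le_max_left _ _) hlt)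
    have hg'' : t⁻¹ • f'' ∈ K := key f'' t ht (lt_of_le_of_lt (le_max_right _ _) hlt)
    have hΛ' : Λ (t⁻¹ • f') = Λ (t⁻¹ • f'') := by
      simp [map_smul, hΛ]
    have hb := hKe _ hg' _ hg'' hΛ'
    have hrec : ∀ f : F, γ f = t * γ (t⁻¹ • f) := by
      intro f
      rw [← hγ t ht.le, smul_smul, mul_inv_cancel₀ ht.ne', one_smul]
    rw [hrec f', hrec f'', ← mul_sub]
    calc t * (γ (t⁻¹ • f') - γ (t⁻¹ • f'')) ≤ t * (2 * e) := by
          exact mul_le_mul_of_nonneg_left hb ht.le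
      _ = 2 * e * t := by ring
  -- pass to the limit
  by_cases hce : 2 * e = 0
  · have := hstep (M + 1) (by linarith)
    rw [hce] at this ⊢
    simpa using this
  · have hce' : 0 < 2 * e := lt_of_le_of_ne (by linarith) (Ne.symm hce)
    apply le_of_forall_pos_le_add
    intro ε hε
    have := hstep (M + ε / (2 * e)) (by have := div_pos hε hce'; linarith)
    calc γ f' - γ f'' ≤ 2 * e * (M + ε / (2 * e)) := this
      _ = 2 * e * M + ε := by rw [mul_add, mul_div_assoc', mul_comm (2 * e) ε, mul_div_assoc, div_self hce, mul_one]
      _ ≤ 2 * e * M + ε := le_refl _
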